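/- Let T be a finite rooted tree and Q a symmetric T×T matrix satisfying condition (H_m): Q_{tr} = 0 unless t and r are comparable in the tree order. If Λ is a T×T matrix with Λ_{tr} = 0 unless r ⪯ t and Λ_{tt} ≠ 0 for all t, then the matrix (Λ^T)^{−1} Q Λ^{−1} also satisfies condition (H_m). In particular, the conditional independence structure (H) of a Gaussian vector is preserved under hierarchical reparametrizations. -/

import Mathlib

open Matrix

section Aux

variable {T : Type*} [Fintype T] [DecidableEq T] [PartialOrder T]

/-- A matrix that is lower triangular in a partial order with nonzero diagonal
has unit determinant (over ℝ). -/
lemma stmt4_det_isUnit (Λ : Matrix T T ℝ)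
    (hΛ0 : ∀ t r : T, ¬ r ≤ t → Λ t r = 0) (hΛd : ∀ t : T, Λ t t ≠ 0) :
    IsUnit Λ.det := by
  classical
  set b : T → (LinearExtension T)ᵒᵈ :=
    fun t => OrderDual.toDual (toLinearExtension t) with hb
  have hbt : Λ.BlockTriangular b := by
    intro i j hij
    apply hΛ0
    intro hji
    have : (toLinearExtension (α := T)) j ≤ toLinearExtension i := toLinearExtension.monotone hji
    exact absurd this (not_le_of_gt hij)
  have hdet : Λ.det = ∏ a ∈ Finset.image b Finset.univ, (Λ.toSquareBlock b a).det := by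
    letI : DecidableEq (LinearExtension T)ᵒᵈ := fun a b => (inferInstance : DecidableEq T) a b
    convert hbt.det
  have hprod : (∏ a ∈ Finset.image b Finset.univ, (Λ.toSquareBlock b a).det) ≠ 0 := by
    rw [Finset.prod_ne_zero_iff]
    intro a ha
    obtain ⟨t, -, rfl⟩ := Finset.mem_image.mp ha
    letI : Unique { s // b s = b t } :=
      { default := ⟨t, rfl⟩
        uniq := fun s => Subtype.ext (by exact s.2) }
    rw [Matrix.det_unique]
    exact hΛd t
  rw [isUnit_iff_ne_zero, hdet]
  exact hprod

/-- The inverse of a matrix lower triangular in a partial order is again lower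
triangular in that partial order. -/
lemma stmt4_inv_lower (Λ : Matrix T T ℝ)
    (hΛ0 : ∀ t r : T, ¬ r ≤ t → Λ t r = 0) (hΛd : ∀ t : T, Λ t t ≠ 0) :
    ∀ t r : T, ¬ r ≤ t → Λ⁻¹ t r = 0 := by
  classical
  have hmul : Λ⁻¹ * Λ = 1 := Matrix.nonsing_inv_mul Λ (stmt4_det_isUnit Λ hΛ0 hΛd)
  intro t
  have wf : WellFounded fun a c : T => a > c := Finite.to_wellFoundedGT.wf
  intro r
  refine wf.induction (C := fun r => ¬ r ≤ t → Λ⁻¹ t r = 0) r ?_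
  intro r IH hr
  have h1 : (Λ⁻¹ * Λ) t r = 0 := by
    rw [hmul]
    have : t ≠ r := fun e => hr (e ▸ le_refl t)
    simp [Matrix.one_apply, this]
  rw [Matrix.mul_apply] at h1
  have h3 : ∑ s, Λ⁻¹ t s * Λ s r = Λ⁻¹ t r * Λ r r := by
    refine Finset.sum_eq_single r ?_ (by simp)
    intro s _ hs
    by_cases hrs : r ≤ s
    · have hlt : r < s := lt_of_le_of_ne hrs (Ne.symm hs)
      have hst : ¬ s ≤ t := fun h => hr (hrs.trans h)
      rw [IH s hlt hst, zero_mul]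
    · rw [hΛ0 s r hrs, mul_zero]
  rw [h3] at h1
  exact (mul_eq_zero.mp h1).resolve_right (hΛd r)

end Aux

/-- On a finite rooted tree, if a symmetric matrix `Q` satisfies (H_m)
(`Q t r = 0` unless `t` and `r` are comparable in the ancestor order) and `Λ` is
lower triangular in the tree order with nonzero diagonal, then
`(Λᵀ)⁻¹ * Q * Λ⁻¹` also satisfies (H_m): conditional independence structure (H)
is preserved under hierarchical reparametrizations. -/
theorem stmt4 {T : Type*} [Fintype T] [DecidableEq T] [PartialOrder T]
    (root : T) (hroot : ∀ t, root ≤ t)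
    (htree : ∀ s t r : T, t ≤ s → r ≤ s → t ≤ r ∨ r ≤ t)
    (Q Λ : Matrix T T ℝ)
    (hQsymm : Q.IsSymm)
    (hQ : ∀ t r : T, ¬ (t ≤ r ∨ r ≤ t) → Q t r = 0)
    (hΛ0 : ∀ t r : T, ¬ r ≤ t → Λ t r = 0) (hΛd : ∀ t : T, Λ t t ≠ 0) :
    ∀ t r : T, ¬ (t ≤ r ∨ r ≤ t) → ((Λᵀ)⁻¹ * Q * Λ⁻¹) t r = 0 := by
  have hinv := stmt4_inv_lower Λ hΛ0 hΛd
  intro t r hcomp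
  rw [← Matrix.transpose_nonsing_inv, Matrix.mul_apply]
  refine Finset.sum_eq_zero fun u _ => ?_
  by_cases hru : r ≤ u
  · rw [Matrix.mul_apply]
    have : ∑ s, (Λ⁻¹)ᵀ t s * Q s u = 0 := by
      refine Finset.sum_eq_zero fun s _ => ?_
      by_cases hts : t ≤ s
      · have hQsu : Q s u = 0 := by
          apply hQ
          rintro (hsu | hus)
          · exact hcomp (htree u t r (hts.trans hsu) hru)
          · exact hcomp (htree s t r hts (hru.trans hus))
        rw [hQsu, mul_zero]
      · rw [Matrix.transpose_apply, hinv s t hts, zero_mul]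
    rw [this, zero_mul]
  · rw [hinv u r hru, mul_zero]
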